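/- Let Γ be a countable group and let P ⊆ Sub_[∞](Γ) be any subset satisfying the following condition (*): for every Λ ∈ P, every d ≥ 1, every g_1,…,g_{2d} ∈ Γ such that the cosets Λg_1,…,Λg_{2d} are pairwise distinct, and every neighborhood V of Λ in Sub(Γ), there exist Λ' ∈ P ∩ V and γ ∈ Γ such that g_i γ g_{i+d}^{-1} ∈ Λ' for all i ∈ {1,…,d}. Let P̄ denote the closure of P in Sub_[∞](Γ). Then HT(Γ) ∩ P̄ is a dense G_δ subset of P̄. -/

import Mathlib

/-- The Chabauty topology on the space of subgroups of `Γ`: the topology induced by the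
injection `Sub(Γ) → {0,1}^Γ` (indicator functions), where `{0,1}^Γ` carries the product
of the discrete topologies. -/
instance chabauty (Γ : Type*) [Group Γ] : TopologicalSpace (Subgroup Γ) :=
  TopologicalSpace.induced (fun (H : Subgroup Γ) (g : Γ) => g ∈ H)
    (@Pi.topologicalSpace Γ (fun _ => Prop) (fun _ => ⊥))

/-- The space of right cosets `Λ\Γ`. -/
def rQuot {Γ : Type*} [Group Γ] (Λ : Subgroup Γ) : Type _ :=
  Quotient (QuotientGroup.rightRel Λ)

/-- The right-translation action of `Γ` on the right coset space `Λ\Γ`: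
`Λx · γ = Λxγ`. -/
def rAct {Γ : Type*} [Group Γ] (Λ : Subgroup Γ) (γ : Γ) : rQuot Λ → rQuot Λ :=
  Quotient.map' (fun x => x * γ) (by
    intro x y h
    rw [QuotientGroup.rightRel_apply] at h ⊢
    have key : y * γ * (x * γ)⁻¹ = y * x⁻¹ := by group
    rw [key]; exact h)

/-- The right-translation action of `Γ` on `Λ\Γ` is highly transitive: for every `d ≥ 1`,
any `d`-tuple of pairwise distinct cosets can be mapped to any other by some `γ ∈ Γ`. -/
def HTcoset {Γ : Type*} [Group Γ] (Λ : Subgroup Γ) : Prop :=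
  ∀ d : ℕ, 1 ≤ d → ∀ x y : Fin d → rQuot Λ,
    Function.Injective x → Function.Injective y →
    ∃ γ : Γ, ∀ i, rAct Λ γ (x i) = y i

/-- `HT(Γ)`: the set of infinite index subgroups `Λ ≤ Γ` whose right-translation action
on `Λ\Γ` is highly transitive. -/
def HTset (Γ : Type*) [Group Γ] : Set (Subgroup Γ) :=
  {Λ | Infinite (rQuot Λ) ∧ HTcoset Λ}

/-! ### Auxiliary material -/

open Set Topology

section Aux

attribute [local instance] Classical.propDecidable

variable {Γ : Type*} [Group Γ]

/-- The indicator map into `Γ → Bool`. -/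
noncomputable def subInd (Γ : Type*) [Group Γ] : Subgroup Γ → Γ → Bool :=
  fun H g => @decide (g ∈ H) (Classical.propDecidable _)

lemma subInd_def {H : Subgroup Γ} {g : Γ} :
    subInd Γ H g = @decide (g ∈ H) (Classical.propDecidable _) := rfl

lemma subInd_eq_true {H : Subgroup Γ} {g : Γ} : subInd Γ H g = true ↔ g ∈ H := by
  rw [subInd_def]
  exact ⟨fun h => @of_decide_eq_true _ (Classical.propDecidable _) h,
    fun h => @decide_eq_true _ (Classical.propDecidable _) h⟩

/-- The auxiliary injection `Prop → Bool`. -/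
noncomputable def pbool : Prop → Bool := fun p => @decide p (Classical.propDecidable p)

lemma pbool_true {p : Prop} (hp : p) : pbool p = true :=
  @decide_eq_true _ (Classical.propDecidable _) hp

lemma pbool_false {p : Prop} (hp : ¬ p) : pbool p = false :=
  @decide_eq_false _ (Classical.propDecidable _) hp

lemma pbool_injective : Function.Injective pbool := by
  intro p q h
  by_cases hp : p <;> by_cases hq : q
  · exact propext ⟨fun _ => hq, fun _ => hp⟩
  · rw [pbool_true hp, pbool_false hq] at h
    exact absurd h (by simp)
  · rw [pbool_false hp, pbool_true hq] at h
    exact absurd h (by simp)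
  · exact propext ⟨fun h' => absurd h' hp, fun h' => absurd h' hq⟩

lemma induced_pbool_bot :
    TopologicalSpace.induced pbool (⊥ : TopologicalSpace Bool) = (⊥ : TopologicalSpace Prop) := by
  refine le_antisymm ?_ bot_le
  rw [TopologicalSpace.le_def]
  intro s _
  exact isOpen_induced_iff.2 ⟨pbool '' s, @isOpen_discrete _ ⊥ ⟨rfl⟩ _,
    pbool_injective.preimage_image s⟩

lemma chabauty_eq_induced (Γ : Type*) [Group Γ] :
    (chabauty Γ : TopologicalSpace (Subgroup Γ)) =
      TopologicalSpace.induced (subInd Γ) Pi.topologicalSpace := by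
  have h1 : subInd Γ = (fun (f : Γ → Prop) (g : Γ) => pbool (f g)) ∘
      (fun (H : Subgroup Γ) (g : Γ) => g ∈ H) := rfl
  show TopologicalSpace.induced (fun (H : Subgroup Γ) (g : Γ) => g ∈ H)
      (@Pi.topologicalSpace Γ (fun _ => Prop) (fun _ => ⊥)) = _
  rw [h1, ← induced_compose]
  congr 1
  have h3 : (inferInstance : TopologicalSpace Bool) = (⊥ : TopologicalSpace Bool) :=
    DiscreteTopology.eq_bot
  symm
  calc TopologicalSpace.induced (fun (f : Γ → Prop) (g : Γ) => pbool (f g))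
        (Pi.topologicalSpace : TopologicalSpace (Γ → Bool))
      = ⨅ a : Γ, TopologicalSpace.induced (fun (f : Γ → Prop) (g : Γ) => pbool (f g))
          (TopologicalSpace.induced (fun f : Γ → Bool => f a) (⊥ : TopologicalSpace Bool)) := by
        rw [show (Pi.topologicalSpace : TopologicalSpace (Γ → Bool)) =
            ⨅ a : Γ, TopologicalSpace.induced (fun f : Γ → Bool => f a)
              (inferInstance : TopologicalSpace Bool) from rfl, h3, induced_iInf]
    _ = ⨅ a : Γ, TopologicalSpace.induced (fun f : Γ → Prop => f a)
          (TopologicalSpace.induced pbool (⊥ : TopologicalSpace Bool)) := by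
        refine iInf_congr fun a => ?_
        rw [induced_compose, induced_compose]
        rfl
    _ = ⨅ a : Γ, TopologicalSpace.induced (fun f : Γ → Prop => f a)
          (⊥ : TopologicalSpace Prop) := by
        rw [induced_pbool_bot]
    _ = @Pi.topologicalSpace Γ (fun _ => Prop) (fun _ => ⊥) := rfl

lemma subInd_injective : Function.Injective (subInd Γ) := by
  intro H₁ H₂ h
  ext a
  rw [← subInd_eq_true, ← subInd_eq_true, h]

lemma isClopen_evalSet (c : Γ) : IsClopen {f : Γ → Bool | f c = true} := by
  have h : {f : Γ → Bool | f c = true} = (fun f : Γ → Bool => f c) ⁻¹' {true} := rfl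
  rw [h]
  exact ⟨(isClosed_discrete ({true} : Set Bool)).preimage (continuous_apply c),
    (isOpen_discrete ({true} : Set Bool)).preimage (continuous_apply c)⟩

lemma isClosed_range_subInd : IsClosed (Set.range (subInd Γ)) := by
  have hr : Set.range (subInd Γ) =
      {f : Γ → Bool | f 1 = true} ∩
        ⋂ a : Γ, ⋂ b : Γ, ({f : Γ → Bool | f a = true}ᶜ ∪ {f : Γ → Bool | f b = true}ᶜ ∪
          {f : Γ → Bool | f (a * b⁻¹) = true}) := by
    ext f
    simp only [Set.mem_range, Set.mem_inter_iff, Set.mem_setOf_eq, Set.mem_iInter,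
      Set.mem_union, Set.mem_compl_iff]
    constructor
    · rintro ⟨H, rfl⟩
      refine ⟨subInd_eq_true.2 H.one_mem, fun a b => ?_⟩
      by_cases ha : a ∈ H
      · by_cases hb : b ∈ H
        · exact Or.inr (subInd_eq_true.2 (H.mul_mem ha (H.inv_mem hb)))
        · exact Or.inl (Or.inr (fun h => hb (subInd_eq_true.1 h)))
      · exact Or.inl (Or.inl (fun h => ha (subInd_eq_true.1 h)))
    · rintro ⟨h1, h2⟩
      have hstep : ∀ a b : Γ, f a = true → f b = true → f (a * b⁻¹) = true := by
        intro a b ha hb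
        rcases h2 a b with (h | h) | h
        · exact absurd ha h
        · exact absurd hb h
        · exact h
      have hinv : ∀ a : Γ, f a = true → f a⁻¹ = true := by
        intro a ha
        have := hstep 1 a h1 ha
        rwa [one_mul] at this
      let H' : Subgroup Γ :=
        { carrier := {a : Γ | f a = true}
          one_mem' := h1
          inv_mem' := fun {a} ha => hinv a ha
          mul_mem' := fun {a b} ha hb => by
            have := hstep a b⁻¹ ha (hinv b hb)
            rwa [inv_inv] at this }
      refine ⟨H', ?_⟩
      funext g
      by_cases hg : f g = true
      · have h' : subInd Γ H' g = true := subInd_eq_true.2 (show g ∈ H' from hg)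
        rw [h', hg]
      · have h' : ¬ subInd Γ H' g = true := fun h => hg (subInd_eq_true.1 h)
        rw [Bool.not_eq_true] at h' hg
        rw [h', hg]
  rw [hr]
  refine IsClosed.inter (isClopen_evalSet 1).isClosed ?_
  refine isClosed_iInter fun a => isClosed_iInter fun b => ?_
  refine IsClosed.union (IsClosed.union ?_ ?_) (isClopen_evalSet _).isClosed
  · exact (isClopen_evalSet a).isOpen.isClosed_compl
  · exact (isClopen_evalSet b).isOpen.isClosed_compl

instance polishSpace_pi_bool (Γ : Type*) [Countable Γ] : PolishSpace (Γ → Bool) :=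
  { toSecondCountableTopology := inferInstance, toIsCompletelyMetrizableSpace := inferInstance }

lemma polishSpace_subgroup (Γ : Type*) [Group Γ] [Countable Γ] :
    PolishSpace (Subgroup Γ) :=
  Topology.IsClosedEmbedding.polishSpace
    (⟨⟨⟨chabauty_eq_induced Γ⟩, subInd_injective⟩, isClosed_range_subInd⟩ :
      Topology.IsClosedEmbedding (subInd Γ))

lemma continuous_subInd : Continuous (subInd Γ) :=
  continuous_iff_le_induced.2 (le_of_eq (chabauty_eq_induced Γ))

lemma isClopen_memSet (a : Γ) : IsClopen {Λ : Subgroup Γ | a ∈ Λ} := by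
  have h : {Λ : Subgroup Γ | a ∈ Λ} = subInd Γ ⁻¹' {f : Γ → Bool | f a = true} := by
    ext Λ
    exact subInd_eq_true.symm
  rw [h]
  exact IsClopen.preimage (isClopen_evalSet a) continuous_subInd

lemma isOpen_memSet (a : Γ) : IsOpen {Λ : Subgroup Γ | a ∈ Λ} := (isClopen_memSet a).isOpen

lemma isOpen_notMemSet (a : Γ) : IsOpen {Λ : Subgroup Γ | a ∉ Λ} :=
  (isClopen_memSet a).compl.isOpen

lemma isClosed_notMemSet (a : Γ) : IsClosed {Λ : Subgroup Γ | a ∉ Λ} :=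
  (isClopen_memSet a).compl.isClosed

/-! ### Coset quotient lemmas -/

/-- Abbreviation for the quotient map. -/
def rqMk (Λ : Subgroup Γ) (a : Γ) : rQuot Λ := Quotient.mk (QuotientGroup.rightRel Λ) a

lemma rqMk_eq_rqMk {Λ : Subgroup Γ} {a b : Γ} : rqMk Λ a = rqMk Λ b ↔ b * a⁻¹ ∈ Λ := by
  unfold rqMk
  refine Quotient.eq.trans ?_
  exact QuotientGroup.rightRel_apply

lemma rqMk_surjective {Λ : Subgroup Γ} (q : rQuot Λ) : ∃ a : Γ, rqMk Λ a = q :=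
  ⟨Quotient.out q, Quotient.out_eq q⟩

lemma rAct_rqMk {Λ : Subgroup Γ} (γ a : Γ) : rAct Λ γ (rqMk Λ a) = rqMk Λ (a * γ) := rfl

lemma rAct_eq_iff {Λ : Subgroup Γ} {a b γ : Γ} :
    rAct Λ γ (rqMk Λ a) = rqMk Λ b ↔ a * γ * b⁻¹ ∈ Λ := by
  rw [rAct_rqMk, rqMk_eq_rqMk, show b * (a * γ)⁻¹ = (a * γ * b⁻¹)⁻¹ by group]
  exact inv_mem_iff

lemma rAct_mul {Λ : Subgroup Γ} (γ₁ γ₂ : Γ) (q : rQuot Λ) :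
    rAct Λ (γ₁ * γ₂) q = rAct Λ γ₂ (rAct Λ γ₁ q) := by
  refine Quotient.inductionOn q (fun a => ?_)
  show rAct Λ (γ₁ * γ₂) (rqMk Λ a) = rAct Λ γ₂ (rAct Λ γ₁ (rqMk Λ a))
  rw [rAct_rqMk, rAct_rqMk, rAct_rqMk, mul_assoc]

/-! ### Distinct-coset tuples -/

/-- The tuple `g` represents pairwise distinct right cosets of `Λ`. -/
def distTup (Λ : Subgroup Γ) (d : ℕ) (g : Fin d → Γ) : Prop :=
  ∀ i j, i ≠ j → g i * (g j)⁻¹ ∉ Λ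

lemma distTup_iff_injective {Λ : Subgroup Γ} {d : ℕ} {g : Fin d → Γ} :
    distTup Λ d g ↔ Function.Injective (fun i => rqMk Λ (g i)) := by
  constructor
  · intro hdt i j hij
    by_contra hne
    have h1 : rqMk Λ (g i) = rqMk Λ (g j) := hij
    exact hdt j i (fun h => hne h.symm) (rqMk_eq_rqMk.1 h1)
  · intro hinj i j hij hmem
    have h1 : rqMk Λ (g j) = rqMk Λ (g i) := rqMk_eq_rqMk.2 hmem
    exact hij (hinj h1.symm)

lemma infinite_rQuot_iff {Λ : Subgroup Γ} :
    Infinite (rQuot Λ) ↔ ∀ n : ℕ, ∃ g : Fin n → Γ, distTup Λ n g := by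
  constructor
  · intro hinf n
    letI := hinf
    let e := Infinite.natEmbedding (rQuot Λ)
    refine ⟨fun i => Quotient.out (e i), distTup_iff_injective.2 ?_⟩
    have hfn : (fun i : Fin n => rqMk Λ (Quotient.out (e i))) = fun i : Fin n => e i := by
      funext i
      exact Quotient.out_eq _
    rw [hfn]
    exact e.injective.comp (fun i j h => Fin.val_injective h)
  · intro h
    by_contra hni
    rw [not_infinite_iff_finite] at hni
    obtain ⟨g, hg⟩ := h (Nat.card (rQuot Λ) + 1)
    have hinj := distTup_iff_injective.1 hg
    have hle := Nat.card_le_card_of_injective _ hinj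
    rw [Nat.card_eq_fintype_card, Fintype.card_fin] at hle
    omega

lemma exists_fresh_tuple {α : Type*} [Infinite α] (S : Set α) (hS : S.Finite) (d : ℕ) :
    ∃ z : Fin d → α, Function.Injective z ∧ ∀ i, z i ∉ S := by
  haveI : Infinite ↥(Sᶜ) := (hS.infinite_compl).to_subtype
  let e := Infinite.natEmbedding ↥(Sᶜ)
  refine ⟨fun i => (e i).1, ?_, fun i => (e i).2⟩
  intro i j hij
  exact Fin.val_injective (e.injective (Subtype.val_injective hij))

/-! ### The open sets in the Baire argument -/

/-- Hypotheses of condition (*) on a pair of tuples. -/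
def memHyp (Λ : Subgroup Γ) (d : ℕ) (g h : Fin d → Γ) : Prop :=
  distTup Λ d g ∧ distTup Λ d h ∧ ∀ i j, g i * (h j)⁻¹ ∉ Λ

/-- The basic open sets whose intersection recovers high transitivity. -/
def Aset (Γ : Type*) [Group Γ] (d : ℕ) (g h : Fin d → Γ) : Set (Subgroup Γ) :=
  {Λ | memHyp Λ d g h → ∃ γ : Γ, ∀ i, g i * γ * (h i)⁻¹ ∈ Λ}

lemma isClosed_condSet {d : ℕ} (c : Fin d → Fin d → Γ) :
    IsClosed (⋂ i, ⋂ j, {Λ : Subgroup Γ | i ≠ j → c i j ∉ Λ}) := by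
  refine isClosed_iInter fun i => isClosed_iInter fun j => ?_
  by_cases hij : i = j
  · have h : {Λ : Subgroup Γ | i ≠ j → c i j ∉ Λ} = Set.univ := by
      ext Λ
      simp [hij]
    rw [h]
    exact isClosed_univ
  · have h : {Λ : Subgroup Γ | i ≠ j → c i j ∉ Λ} = {Λ : Subgroup Γ | c i j ∉ Λ} := by
      ext Λ
      simp [hij]
    rw [h]
    exact isClosed_notMemSet _

lemma isOpen_condSet {d : ℕ} (c : Fin d → Fin d → Γ) :
    IsOpen (⋂ i, ⋂ j, {Λ : Subgroup Γ | i ≠ j → c i j ∉ Λ}) := by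
  refine isOpen_iInter_of_finite fun i => isOpen_iInter_of_finite fun j => ?_
  by_cases hij : i = j
  · have h : {Λ : Subgroup Γ | i ≠ j → c i j ∉ Λ} = Set.univ := by
      ext Λ
      simp [hij]
    rw [h]
    exact isOpen_univ
  · have h : {Λ : Subgroup Γ | i ≠ j → c i j ∉ Λ} = {Λ : Subgroup Γ | c i j ∉ Λ} := by
      ext Λ
      simp [hij]
    rw [h]
    exact isOpen_notMemSet _

lemma isClosed_memHypSet {d : ℕ} (g h : Fin d → Γ) :
    IsClosed {Λ : Subgroup Γ | memHyp Λ d g h} := by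
  have hs : {Λ : Subgroup Γ | memHyp Λ d g h} =
      (⋂ i, ⋂ j, {Λ : Subgroup Γ | i ≠ j → g i * (g j)⁻¹ ∉ Λ}) ∩
        ((⋂ i, ⋂ j, {Λ : Subgroup Γ | i ≠ j → h i * (h j)⁻¹ ∉ Λ}) ∩
          (⋂ i, ⋂ j, {Λ : Subgroup Γ | g i * (h j)⁻¹ ∉ Λ})) := by
    ext Λ
    simp only [Set.mem_setOf_eq, Set.mem_inter_iff, Set.mem_iInter, memHyp, distTup]
  rw [hs]
  refine IsClosed.inter (isClosed_condSet _) (IsClosed.inter (isClosed_condSet _) ?_)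
  exact isClosed_iInter fun i => isClosed_iInter fun j => isClosed_notMemSet _

lemma isOpen_Aset {d : ℕ} (g h : Fin d → Γ) : IsOpen (Aset Γ d g h) := by
  have hs : Aset Γ d g h = {Λ : Subgroup Γ | memHyp Λ d g h}ᶜ ∪
      ⋃ γ : Γ, ⋂ i, {Λ : Subgroup Γ | g i * γ * (h i)⁻¹ ∈ Λ} := by
    ext Λ
    simp only [Aset, Set.mem_setOf_eq, Set.mem_union, Set.mem_compl_iff, Set.mem_iUnion,
      Set.mem_iInter]
    tauto
  rw [hs]
  refine IsOpen.union (isClosed_memHypSet g h).isOpen_compl ?_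
  exact isOpen_iUnion fun γ => isOpen_iInter_of_finite fun i => isOpen_memSet _

/-- The distinctness set `D n`. -/
def Dset (Γ : Type*) [Group Γ] (n : ℕ) : Set (Subgroup Γ) :=
  {Λ | ∃ g : Fin n → Γ, distTup Λ n g}

lemma isOpen_Dset (n : ℕ) : IsOpen (Dset Γ n) := by
  have hs : Dset Γ n =
      ⋃ g : Fin n → Γ, ⋂ i, ⋂ j, {Λ : Subgroup Γ | i ≠ j → g i * (g j)⁻¹ ∉ Λ} := by
    ext Λ
    simp only [Dset, Set.mem_setOf_eq, Set.mem_iUnion, Set.mem_iInter, distTup]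
  rw [hs]
  exact isOpen_iUnion fun g => isOpen_condSet _

/-! ### Reconstructing high transitivity -/

lemma HTset_subset_Aset {d : ℕ} (g h : Fin d → Γ) : HTset Γ ⊆ Aset Γ d g h := by
  rintro Λ ⟨hinf, hht⟩ hm
  rcases Nat.eq_zero_or_pos d with hd | hd
  · subst hd
    exact ⟨1, fun i => i.elim0⟩
  · obtain ⟨γ, hγ⟩ := hht d hd (fun i => rqMk Λ (g i)) (fun i => rqMk Λ (h i))
      (distTup_iff_injective.1 hm.1) (distTup_iff_injective.1 hm.2.1)
    exact ⟨γ, fun i => rAct_eq_iff.1 (hγ i)⟩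

lemma mem_HTset_of_Aset {Λ : Subgroup Γ}
    (hA : ∀ d : ℕ, ∀ g h : Fin d → Γ, Λ ∈ Aset Γ d g h)
    (hinf : Infinite (rQuot Λ)) : Λ ∈ HTset Γ := by
  refine ⟨hinf, fun d _ x y hx hy => ?_⟩
  haveI := hinf
  have hSfin : (Set.range x ∪ Set.range y).Finite :=
    (Set.finite_range x).union (Set.finite_range y)
  obtain ⟨z, hzinj, hz⟩ := exists_fresh_tuple (Set.range x ∪ Set.range y) hSfin d
  -- representatives
  have hxr : ∀ i, rqMk Λ (Quotient.out (x i)) = x i := fun i => Quotient.out_eq _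
  have hyr : ∀ i, rqMk Λ (Quotient.out (y i)) = y i := fun i => Quotient.out_eq _
  have hzr : ∀ i, rqMk Λ (Quotient.out (z i)) = z i := fun i => Quotient.out_eq _
  set gx : Fin d → Γ := fun i => Quotient.out (x i) with hgx
  set gy : Fin d → Γ := fun i => Quotient.out (y i) with hgy
  set gz : Fin d → Γ := fun i => Quotient.out (z i) with hgz
  have hdx : distTup Λ d gx := by
    refine distTup_iff_injective.2 ?_
    have : (fun i => rqMk Λ (gx i)) = x := funext hxr
    rw [this]; exact hx
  have hdy : distTup Λ d gy := by
    refine distTup_iff_injective.2 ?_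
    have : (fun i => rqMk Λ (gy i)) = y := funext hyr
    rw [this]; exact hy
  have hdz : distTup Λ d gz := by
    refine distTup_iff_injective.2 ?_
    have : (fun i => rqMk Λ (gz i)) = z := funext hzr
    rw [this]; exact hzinj
  have hcross1 : ∀ i j, gx i * (gz j)⁻¹ ∉ Λ := by
    intro i j hmem
    have h1 : rqMk Λ (gz j) = rqMk Λ (gx i) := rqMk_eq_rqMk.2 hmem
    rw [hzr j, hxr i] at h1
    exact hz j (Or.inl ⟨i, h1.symm⟩)
  have hcross2 : ∀ i j, gz i * (gy j)⁻¹ ∉ Λ := by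
    intro i j hmem
    have h1 : rqMk Λ (gy j) = rqMk Λ (gz i) := rqMk_eq_rqMk.2 hmem
    rw [hzr i, hyr j] at h1
    exact hz i (Or.inr ⟨j, h1⟩)
  obtain ⟨γ₁, hγ₁⟩ := hA d gx gz ⟨hdx, hdz, hcross1⟩
  obtain ⟨γ₂, hγ₂⟩ := hA d gz gy ⟨hdz, hdy, hcross2⟩
  refine ⟨γ₁ * γ₂, fun i => ?_⟩
  rw [rAct_mul]
  have h1 : rAct Λ γ₁ (x i) = z i := by
    rw [← hxr i, ← hzr i]
    exact rAct_eq_iff.2 (hγ₁ i)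
  have h2 : rAct Λ γ₂ (z i) = y i := by
    rw [← hzr i, ← hyr i]
    exact rAct_eq_iff.2 (hγ₂ i)
  rw [h1, h2]

end Aux

/-- If `P ⊆ Sub_[∞](Γ)` satisfies Condition (*), then `HT(Γ) ∩ P̄` is a dense `Gδ`
subset of `P̄`, the closure of `P` in the subspace `Sub_[∞](Γ)`. -/
theorem HTset_dense_Gδ_in_closure (Γ : Type*) [Group Γ] [Countable Γ]
    (P : Set (Subgroup Γ))
    (hPinf : ∀ Λ ∈ P, Infinite (rQuot Λ))
    (hstar : ∀ Λ ∈ P, ∀ d : ℕ, 1 ≤ d → ∀ g h : Fin d → Γ,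
      (∀ i j, i ≠ j → g i * (g j)⁻¹ ∉ Λ) →
      (∀ i j, i ≠ j → h i * (h j)⁻¹ ∉ Λ) →
      (∀ i j, g i * (h j)⁻¹ ∉ Λ) →
      ∀ V ∈ nhds Λ, ∃ Λ' ∈ P ∩ V, ∃ γ : Γ, ∀ i, g i * γ * (h i)⁻¹ ∈ Λ') :
    -- `P̄` is the closure of `P` inside the subspace `Sub_[∞](Γ)`
    (closure P ∩ {Λ : Subgroup Γ | Infinite (rQuot Λ)}) ⊆
        closure (HTset Γ ∩ (closure P ∩ {Λ : Subgroup Γ | Infinite (rQuot Λ)})) ∧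
      ∃ T : Set (Subgroup Γ), IsGδ T ∧
        HTset Γ ∩ (closure P ∩ {Λ : Subgroup Γ | Infinite (rQuot Λ)}) =
          T ∩ (closure P ∩ {Λ : Subgroup Γ | Infinite (rQuot Λ)}) := by
  classical
  haveI : PolishSpace (Subgroup Γ) := polishSpace_subgroup Γ
  set Sinf : Set (Subgroup Γ) := {Λ : Subgroup Γ | Infinite (rQuot Λ)} with hSinf
  set C : Set (Subgroup Γ) := closure P ∩ Sinf with hC
  -- index type for the A sets
  set T : Set (Subgroup Γ) :=
    ⋂ p : Σ d : ℕ, (Fin d → Γ) × (Fin d → Γ), Aset Γ p.1 p.2.1 p.2.2 with hT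
  have hTGδ : IsGδ T := IsGδ.iInter_of_isOpen fun p => isOpen_Aset _ _
  -- Equality `HTset ∩ C = T ∩ C`
  have hEq : HTset Γ ∩ C = T ∩ C := by
    ext Λ
    constructor
    · rintro ⟨hHT, hΛC⟩
      exact ⟨Set.mem_iInter.2 fun p => HTset_subset_Aset _ _ hHT, hΛC⟩
    · rintro ⟨hΛT, hΛC⟩
      refine ⟨mem_HTset_of_Aset (fun d g h => ?_) hΛC.2, hΛC⟩
      exact Set.mem_iInter.1 hΛT ⟨d, g, h⟩
  -- Baire category argument on the closed set `closure P`
  have hdense :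
      ∀ Λ ∈ C, Λ ∈ closure (HTset Γ ∩ C) := by
    haveI : PolishSpace ↥(closure P) := IsClosed.polishSpace isClosed_closure
    letI := TopologicalSpace.upgradeIsCompletelyMetrizable ↥(closure P)
    set u : ((Σ d : ℕ, (Fin d → Γ) × (Fin d → Γ)) ⊕ ℕ) → Set ↥(closure P) := fun i =>
      Sum.elim
        (fun p : Σ d : ℕ, (Fin d → Γ) × (Fin d → Γ) =>
          Subtype.val ⁻¹' Aset Γ p.1 p.2.1 p.2.2)
        (fun n : ℕ => Subtype.val ⁻¹' Dset Γ n) i with hu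
    have ho : ∀ i, IsOpen (u i) := by
      rintro (p | n)
      · exact (isOpen_Aset _ _).preimage continuous_subtype_val
      · exact (isOpen_Dset _).preimage continuous_subtype_val
    have hd : ∀ i, Dense (u i) := by
      intro i
      rw [dense_iff_inter_open]
      rintro U hU ⟨xK, hxU⟩
      obtain ⟨V, hVopen, hVU⟩ := isOpen_induced_iff.1 hU
      have hxV : (xK : Subgroup Γ) ∈ V := by
        rw [← hVU] at hxU
        exact hxU
      obtain ⟨Λ₀, hΛ₀V, hΛ₀P⟩ := mem_closure_iff.1 xK.2 V hVopen hxV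
      have hmemU : ∀ Λ' : Subgroup Γ, (hP : Λ' ∈ P) → Λ' ∈ V →
          (⟨Λ', subset_closure hP⟩ : ↥(closure P)) ∈ U := by
        intro Λ' hP hV
        rw [← hVU]
        exact hV
      cases i with
      | inl p =>
        obtain ⟨d, g, h⟩ := p
        by_cases hm : memHyp Λ₀ d g h
        · rcases Nat.eq_zero_or_pos d with hd0 | hd1
          · subst hd0
            exact ⟨⟨Λ₀, subset_closure hΛ₀P⟩, hmemU Λ₀ hΛ₀P hΛ₀V,
              fun _ => ⟨1, fun i => i.elim0⟩⟩
          · obtain ⟨Λ', ⟨hΛ'P, hΛ'V⟩, γ, hγ⟩ :=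
              hstar Λ₀ hΛ₀P d hd1 g h hm.1 hm.2.1 hm.2.2 V (hVopen.mem_nhds hΛ₀V)
            exact ⟨⟨Λ', subset_closure hΛ'P⟩, hmemU Λ' hΛ'P hΛ'V, fun _ => ⟨γ, hγ⟩⟩
        · exact ⟨⟨Λ₀, subset_closure hΛ₀P⟩, hmemU Λ₀ hΛ₀P hΛ₀V,
            fun hm' => absurd hm' hm⟩
      | inr n =>
        refine ⟨⟨Λ₀, subset_closure hΛ₀P⟩, hmemU Λ₀ hΛ₀P hΛ₀V, ?_⟩
        show Λ₀ ∈ Dset Γ n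
        exact infinite_rQuot_iff.1 (hPinf Λ₀ hΛ₀P) n
    have hBaire : Dense (⋂ i, u i) := dense_iInter_of_isOpen ho hd
    intro Λ hΛ
    have h1 : (⟨Λ, hΛ.1⟩ : ↥(closure P)) ∈ closure (⋂ i, u i) := hBaire _
    rw [closure_subtype] at h1
    refine closure_mono ?_ h1
    rintro Λ' ⟨w, hw, rfl⟩
    have hwA : ∀ p : Σ d : ℕ, (Fin d → Γ) × (Fin d → Γ),
        (w : Subgroup Γ) ∈ Aset Γ p.1 p.2.1 p.2.2 := fun p =>
      Set.mem_iInter.1 hw (Sum.inl p)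
    have hwD : ∀ n : ℕ, (w : Subgroup Γ) ∈ Dset Γ n := fun n =>
      Set.mem_iInter.1 hw (Sum.inr n)
    have hwInf : Infinite (rQuot (w : Subgroup Γ)) :=
      infinite_rQuot_iff.2 fun n => hwD n
    exact ⟨mem_HTset_of_Aset (fun d g h => hwA ⟨d, g, h⟩) hwInf, w.2, hwInf⟩
  exact ⟨hdense, T, hTGδ, hEq⟩
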